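/- Let y ∈ ℝ⁴_{>0}, N = y1+y2+y3+y4, z1 = 3y1+2y2+y3, z2 = y2+y3+y4, z3 = z1+z2, and define p̂ = (z1³/z3³, z1²z2/z3³, z1z2/z3², z2/z3). Then for the matrix A = [[3,2,1,0],[0,1,1,1]], one has A p̂ = γ · A (y/N) with adjustment factor γ = N·(z1² + z1·z3 + z3²)/z3³. -/

import Mathlib

/-- The closed-form MLE `p̂` satisfies `A p̂ = γ · A (y/N)` with adjustment
factor `γ = N (z₁² + z₁z₃ + z₃²)/z₃³`, for `A = [[3,2,1,0],[0,1,1,1]]`. -/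
theorem adjustment_factor_identity (y1 y2 y3 y4 N z1 z2 z3 γ : ℝ)
    (h1 : 0 < y1) (h2 : 0 < y2) (h3 : 0 < y3) (h4 : 0 < y4)
    (hN : N = y1 + y2 + y3 + y4)
    (hz1 : z1 = 3*y1 + 2*y2 + y3) (hz2 : z2 = y2 + y3 + y4)
    (hz3 : z3 = z1 + z2)
    (hγ : γ = N * (z1^2 + z1*z3 + z3^2) / z3^3) :
    3 * (z1^3 / z3^3) + 2 * (z1^2 * z2 / z3^3) + (z1 * z2 / z3^2)
        = γ * ((3*y1 + 2*y2 + y3) / N) ∧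
    (z1^2 * z2 / z3^3) + (z1 * z2 / z3^2) + (z2 / z3)
        = γ * ((y2 + y3 + y4) / N) := by
  have hNpos : (0:ℝ) < N := by rw [hN]; linarith
  have hz3pos : (0:ℝ) < z3 := by rw [hz3, hz1, hz2]; linarith
  have hN0 := hNpos.ne'
  have hz30 := hz3pos.ne'
  subst hγ hz1 hz2
  constructor
  · field_simp; subst hz3; ring
  · field_simp
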